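/- An affine quasigroup Q = Aff(G,+,φ,ψ,c) over an abelian group G is simple if and only if G contains no subgroup N with {0} ≠ N ≠ G satisfying φ(N) = N and ψ(N) = N. -/

import Mathlib

/-- The affine operation `x * y = φ(x) + ψ(y) + c` over an abelian group. -/
def affOp {G : Type*} [AddCommGroup G] (φ ψ : G ≃+ G) (c : G) : G → G → G :=
  fun x y => φ x + ψ y + c

/-- The left division of the affine quasigroup: `a \ b` is the unique `x`
with `affOp φ ψ c a x = b`. -/
def affLdiv {G : Type*} [AddCommGroup G] (φ ψ : G ≃+ G) (c : G) : G → G → G :=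
  fun a b => ψ.symm (b - φ a - c)

/-- The right division of the affine quasigroup: `b / a` is the unique `x`
with `affOp φ ψ c x a = b`. -/
def affRdiv {G : Type*} [AddCommGroup G] (φ ψ : G ≃+ G) (c : G) : G → G → G :=
  fun b a => φ.symm (b - ψ a - c)

/-- `α` is a congruence of the quasigroup with multiplication `op`, left division `ld`
and right division `rd`: an equivalence relation compatible with all three operations. -/
def IsCongruence {Q : Type*} (op ld rd : Q → Q → Q) (α : Q → Q → Prop) : Prop :=
  Equivalence α ∧
  (∀ a b a' b', α a a' → α b b' → α (op a b) (op a' b')) ∧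
  (∀ a b a' b', α a a' → α b b' → α (ld a b) (ld a' b')) ∧
  (∀ a b a' b', α a a' → α b b' → α (rd a b) (rd a' b'))

/-- An affine quasigroup is simple iff the group has no proper nontrivial subgroup
invariant under both defining automorphisms. -/
theorem affine_simple_iff_no_invariant_subgroup {G : Type*} [AddCommGroup G]
    (φ ψ : G ≃+ G) (c : G) :
    (∀ α : G → G → Prop,
        IsCongruence (affOp φ ψ c) (affLdiv φ ψ c) (affRdiv φ ψ c) α →
          (∀ a b : G, α a b ↔ a = b) ∨ (∀ a b : G, α a b)) ↔
      ¬ ∃ N : AddSubgroup G, N ≠ ⊥ ∧ N ≠ ⊤ ∧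
          AddSubgroup.map (φ : G →+ G) N = N ∧ AddSubgroup.map (ψ : G →+ G) N = N := by
  constructor
  · -- simple → no invariant proper nontrivial subgroup
    intro hsimp
    rintro ⟨N, hbot, htop, hφN, hψN⟩
    set α : G → G → Prop := fun a b => a - b ∈ N with hαdef
    have hφmem : ∀ x, x ∈ N → φ x ∈ N := fun x hx => by
      rw [← hφN]; exact AddSubgroup.mem_map_of_mem _ hx
    have hψmem : ∀ x, x ∈ N → ψ x ∈ N := fun x hx => by
      rw [← hψN]; exact AddSubgroup.mem_map_of_mem _ hx
    have hφ'mem : ∀ x, x ∈ N → φ.symm x ∈ N := by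
      intro x hx
      rw [← hφN] at hx
      obtain ⟨y, hy, hyx⟩ := hx
      have : y = φ.symm x := by simp [← hyx]
      rwa [← this]
    have hψ'mem : ∀ x, x ∈ N → ψ.symm x ∈ N := by
      intro x hx
      rw [← hψN] at hx
      obtain ⟨y, hy, hyx⟩ := hx
      have : y = ψ.symm x := by simp [← hyx]
      rwa [← this]
    have hcong : IsCongruence (affOp φ ψ c) (affLdiv φ ψ c) (affRdiv φ ψ c) α := by
      refine ⟨⟨fun a => by simpa [hαdef] using N.zero_mem, fun {a b} h => ?_, fun {a b d} h1 h2 => ?_⟩,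
        ?_, ?_, ?_⟩
      · simpa [hαdef] using N.neg_mem h
      · simpa [hαdef] using N.add_mem h1 h2
      · intro a b a' b' h1 h2
        have : affOp φ ψ c a b - affOp φ ψ c a' b' = φ (a - a') + ψ (b - b') := by
          simp [affOp]; abel
        simpa [hαdef, this] using N.add_mem (hφmem _ h1) (hψmem _ h2)
      · intro a b a' b' h1 h2
        have : affLdiv φ ψ c a b - affLdiv φ ψ c a' b' = ψ.symm ((b - b') - φ (a - a')) := by
          simp [affLdiv]; abel
        simpa [hαdef, this] using hψ'mem _ (N.sub_mem h2 (hφmem _ h1))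
      · intro a b a' b' h1 h2
        have : affRdiv φ ψ c a b - affRdiv φ ψ c a' b' = φ.symm ((a - a') - ψ (b - b')) := by
          simp [affRdiv]; abel
        simpa [hαdef, this] using hφ'mem _ (N.sub_mem h1 (hψmem _ h2))
    rcases hsimp α hcong with h | h
    · -- α would be equality, contradicting N ≠ ⊥
      apply hbot
      ext x
      simp only [AddSubgroup.mem_bot]
      constructor
      · intro hx
        have : α x 0 := by simpa [hαdef] using hx
        exact (h x 0).mp this
      · rintro rfl; exact N.zero_mem
    · -- α would be full, contradicting N ≠ ⊤
      apply htop
      ext x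
      simp only [AddSubgroup.mem_top, iff_true]
      have := h x 0
      simpa [hαdef] using this
  · -- no invariant subgroup → simple
    intro hno α hcong
    by_cases hd : ∀ a b : G, α a b ↔ a = b
    · exact Or.inl hd
    right
    obtain ⟨hequiv, hop, hld, hrd⟩ := hcong
    -- α is preserved by x ↦ ψ x + t for any t
    have hψc : ∀ (t : G) {a b : G}, α a b → α (ψ a + t) (ψ b + t) := by
      intro t a b h
      have := hop (φ.symm (t - c)) a (φ.symm (t - c)) b (hequiv.refl _) h
      have e : ∀ x : G, affOp φ ψ c (φ.symm (t - c)) x = ψ x + t := by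
        intro x; simp [affOp]; abel
      rwa [e, e] at this
    -- α is preserved by x ↦ φ x + t for any t
    have hφc : ∀ (t : G) {a b : G}, α a b → α (φ a + t) (φ b + t) := by
      intro t a b h
      have := hop a (ψ.symm (t - c)) b (ψ.symm (t - c)) h (hequiv.refl _)
      have e : ∀ x : G, affOp φ ψ c x (ψ.symm (t - c)) = φ x + t := by
        intro x; simp [affOp]; abel
      rwa [e, e] at this
    -- α is preserved by x ↦ ψ.symm x + t for any t
    have hψ'c : ∀ (t : G) {a b : G}, α a b → α (ψ.symm a + t) (ψ.symm b + t) := by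
      intro t a b h
      have := hld (φ.symm (-c - ψ t)) a (φ.symm (-c - ψ t)) b (hequiv.refl _) h
      have e : ∀ x : G, affLdiv φ ψ c (φ.symm (-c - ψ t)) x = ψ.symm x + t := by
        intro x
        simp only [affLdiv, AddEquiv.apply_symm_apply]
        rw [show x - (-c - ψ t) - c = x + ψ t by abel]
        simp
      rwa [e, e] at this
    -- α is preserved by x ↦ φ.symm x + t for any t
    have hφ'c : ∀ (t : G) {a b : G}, α a b → α (φ.symm a + t) (φ.symm b + t) := by
      intro t a b h
      have := hrd a (ψ.symm (-c - φ t)) b (ψ.symm (-c - φ t)) h (hequiv.refl _)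
      have e : ∀ x : G, affRdiv φ ψ c x (ψ.symm (-c - φ t)) = φ.symm x + t := by
        intro x
        simp only [affRdiv, AddEquiv.apply_symm_apply]
        rw [show x - (-c - φ t) - c = x + φ t by abel]
        simp
      rwa [e, e] at this
    -- translations preserve α
    have htr : ∀ (t : G) {a b : G}, α a b → α (a + t) (b + t) := by
      intro t a b h
      have h1 := hψc (ψ t) h
      have h2 := hψ'c 0 h1
      simpa using h2
    -- the congruence class of 0 is a subgroup
    set N : AddSubgroup G :=
      { carrier := {x | α x 0}
        zero_mem' := hequiv.refl 0
        add_mem' := by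
          intro x y hx hy
          have := htr y hx
          rw [zero_add] at this
          exact hequiv.trans this hy
        neg_mem' := by
          intro x hx
          have := htr (-x) hx
          rw [add_neg_cancel, zero_add] at this
          exact hequiv.symm this } with hNdef
    have hmemN : ∀ x : G, x ∈ N ↔ α x 0 := fun x => Iff.rfl
    have hchar : ∀ a b : G, α a b ↔ a - b ∈ N := by
      intro a b
      constructor
      · intro h
        have := htr (-b) h
        rw [add_neg_cancel] at this
        simpa [hmemN, sub_eq_add_neg] using this
      · intro h
        have := htr b ((hmemN _).mp h)
        rwa [sub_add_cancel, zero_add] at this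
    -- invariance of N
    have hφinv : AddSubgroup.map (φ : G →+ G) N = N := by
      ext x
      simp only [AddSubgroup.mem_map]
      constructor
      · rintro ⟨y, hy, rfl⟩
        have := hφc 0 ((hmemN _).mp hy)
        exact (hmemN _).mpr (by simpa using this)
      · intro hx
        refine ⟨φ.symm x, ?_, by simp⟩
        have := hφ'c 0 ((hmemN _).mp hx)
        exact (hmemN _).mpr (by simpa using this)
    have hψinv : AddSubgroup.map (ψ : G →+ G) N = N := by
      ext x
      simp only [AddSubgroup.mem_map]
      constructor
      · rintro ⟨y, hy, rfl⟩
        have := hψc 0 ((hmemN _).mp hy)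
        exact (hmemN _).mpr (by simpa using this)
      · intro hx
        refine ⟨ψ.symm x, ?_, by simp⟩
        have := hψ'c 0 ((hmemN _).mp hx)
        exact (hmemN _).mpr (by simpa using this)
    -- N is nontrivial since α is not equality
    have hbot : N ≠ ⊥ := by
      push_neg at hd
      obtain ⟨a, b, hab⟩ := hd
      rcases hab with ⟨h1, h2⟩ | ⟨h1, h2⟩
      · intro hNb
        have : a - b ∈ N := (hchar a b).mp h1
        rw [hNb, AddSubgroup.mem_bot, sub_eq_zero] at this
        exact h2 this
      · exact absurd (h2 ▸ hequiv.refl a) h1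
    -- hence N = ⊤
    have htopN : N = ⊤ := by
      by_contra hnt
      exact hno ⟨N, hbot, hnt, hφinv, hψinv⟩
    intro a b
    rw [hchar a b, htopN]
    trivial
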